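/- Let B and B̂ be binary random variables with Pr[B=0] = a and Pr[B̂=0] = b, and joint distribution determined by z = Pr[B = B̂ = 0]. If B → X → Y → B̂ is a Markov chain, then z ≤ ab + ρ_m(X;Y)·√(a(1−a)b(1−b)), where ρ_m(X;Y) is the maximal correlation between X and Y. -/

import Mathlib

open Finset Real

/-- Maximal correlation of a joint pmf `r` on `α × β`: the supremum of
`E[f(X)g(Y)]` over zero-mean, unit-second-moment `f`, `g`. -/
noncomputable def maxCorr {α β : Type*} [Fintype α] [Fintype β]
    (r : α → β → ℝ) : ℝ :=
  sSup { t : ℝ | ∃ f : α → ℝ, ∃ g : β → ℝ,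
    (∑ x, ∑ y, f x * r x y) = 0 ∧ (∑ x, ∑ y, g y * r x y) = 0 ∧
    (∑ x, ∑ y, (f x) ^ 2 * r x y) = 1 ∧ (∑ x, ∑ y, (g y) ^ 2 * r x y) = 1 ∧
    t = ∑ x, ∑ y, f x * g y * r x y }

section Aux

variable {α β : Type*} [Fintype α] [Fintype β]

/-- Cauchy–Schwarz for double sums weighted by a nonnegative kernel. -/
lemma double_cs (r : α → β → ℝ) (hr0 : ∀ x y, 0 ≤ r x y) (f : α → ℝ) (g : β → ℝ) :
    (∑ x, ∑ y, f x * g y * r x y) ^ 2 ≤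
      (∑ x, ∑ y, f x ^ 2 * r x y) * (∑ x, ∑ y, g y ^ 2 * r x y) := by
  have h1 : (∑ x, ∑ y, f x * g y * r x y) =
      ∑ p : α × β, (f p.1 * Real.sqrt (r p.1 p.2)) * (g p.2 * Real.sqrt (r p.1 p.2)) := by
    rw [Fintype.sum_prod_type]
    refine Finset.sum_congr rfl fun x _ => Finset.sum_congr rfl fun y _ => ?_
    rw [mul_mul_mul_comm, Real.mul_self_sqrt (hr0 x y)]
  have h2 : (∑ x, ∑ y, f x ^ 2 * r x y) =
      ∑ p : α × β, (f p.1 * Real.sqrt (r p.1 p.2)) ^ 2 := by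
    rw [Fintype.sum_prod_type]
    refine Finset.sum_congr rfl fun x _ => Finset.sum_congr rfl fun y _ => ?_
    rw [mul_pow, Real.sq_sqrt (hr0 x y)]
  have h3 : (∑ x, ∑ y, g y ^ 2 * r x y) =
      ∑ p : α × β, (g p.2 * Real.sqrt (r p.1 p.2)) ^ 2 := by
    rw [Fintype.sum_prod_type]
    refine Finset.sum_congr rfl fun x _ => Finset.sum_congr rfl fun y _ => ?_
    rw [mul_pow, Real.sq_sqrt (hr0 x y)]
  rw [h1, h2, h3]
  exact Finset.sum_mul_sq_le_sq_mul_sq _ _ _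

lemma maxCorr_bddAbove (r : α → β → ℝ) (hr0 : ∀ x y, 0 ≤ r x y) :
    BddAbove { t : ℝ | ∃ f : α → ℝ, ∃ g : β → ℝ,
      (∑ x, ∑ y, f x * r x y) = 0 ∧ (∑ x, ∑ y, g y * r x y) = 0 ∧
      (∑ x, ∑ y, (f x) ^ 2 * r x y) = 1 ∧ (∑ x, ∑ y, (g y) ^ 2 * r x y) = 1 ∧
      t = ∑ x, ∑ y, f x * g y * r x y } := by
  refine ⟨1, ?_⟩
  rintro t ⟨f, g, hf0, hg0, hf2, hg2, rfl⟩
  have key := double_cs r hr0 f g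
  rw [hf2, hg2] at key
  nlinarith [sq_nonneg ((∑ x, ∑ y, f x * g y * r x y) - 1)]

lemma maxCorr_nonneg (r : α → β → ℝ) (hr0 : ∀ x y, 0 ≤ r x y) : 0 ≤ maxCorr r := by
  set S := { t : ℝ | ∃ f : α → ℝ, ∃ g : β → ℝ,
    (∑ x, ∑ y, f x * r x y) = 0 ∧ (∑ x, ∑ y, g y * r x y) = 0 ∧
    (∑ x, ∑ y, (f x) ^ 2 * r x y) = 1 ∧ (∑ x, ∑ y, (g y) ^ 2 * r x y) = 1 ∧
    t = ∑ x, ∑ y, f x * g y * r x y } with hS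
  have hbdd : BddAbove S := maxCorr_bddAbove r hr0
  rcases Set.eq_empty_or_nonempty S with he | ⟨t, ht⟩
  · unfold maxCorr; rw [← hS, he, Real.sSup_empty]
  · obtain ⟨f, g, hf0, hg0, hf2, hg2, htv⟩ := ht
    have ht1 : t ∈ S := ⟨f, g, hf0, hg0, hf2, hg2, htv⟩
    have ht2 : -t ∈ S := by
      refine ⟨fun x => -f x, g, ?_, hg0, ?_, hg2, ?_⟩
      · simp only [neg_mul, Finset.sum_neg_distrib, hf0, neg_zero]
      · simpa using hf2
      · rw [htv]
        simp only [neg_mul, Finset.sum_neg_distrib]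
    have h1 : t ≤ maxCorr r := le_csSup hbdd ht1
    have h2 : -t ≤ maxCorr r := le_csSup hbdd ht2
    linarith

lemma pull_const (c : ℝ) (h : α → β → ℝ) :
    ∑ x, ∑ y, c * h x y = c * ∑ x, ∑ y, h x y := by
  simp [Finset.mul_sum]

end Aux

/-- For binary `B, B̂` with `B → X → Y → B̂` (joint pmf
`(b,x,y,b̂) ↦ r x y * u x b * w y b̂`), `Pr[B=0] = a`, `Pr[B̂=0] = b` (with `true`
encoding the symbol `0`), the agreement probability `z = Pr[B = B̂ = 0]` satisfies
`z ≤ ab + ρₘ(X;Y)√(a(1-a)b(1-b))`. -/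
theorem agreement_prob_le_maxCorr {α β : Type*} [Fintype α] [Fintype β]
    (r : α → β → ℝ) (hr0 : ∀ x y, 0 ≤ r x y) (hr1 : ∑ x, ∑ y, r x y = 1)
    (u : α → Bool → ℝ) (hu0 : ∀ x c, 0 ≤ u x c)
    (hu1 : ∀ x, u x false + u x true = 1)
    (w : β → Bool → ℝ) (hw0 : ∀ y c, 0 ≤ w y c)
    (hw1 : ∀ y, w y false + w y true = 1)
    (a b : ℝ)
    (ha : a = ∑ x, ∑ y, r x y * u x true)
    (hb : b = ∑ x, ∑ y, r x y * w y true) :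
    (∑ x, ∑ y, r x y * (u x true * w y true)) ≤
      a * b + maxCorr r * Real.sqrt (a * (1 - a) * (b * (1 - b))) := by
  classical
  have hu1' : ∀ x, u x true ≤ 1 := fun x => by
    have := hu0 x false; have := hu1 x; linarith
  have hw1' : ∀ y, w y true ≤ 1 := fun y => by
    have := hw0 y false; have := hw1 y; linarith
  set z := ∑ x, ∑ y, r x y * (u x true * w y true) with hz
  set Su := ∑ x, ∑ y, (u x true - a) ^ 2 * r x y with hSu
  set Sw := ∑ x, ∑ y, (w y true - b) ^ 2 * r x y with hSw
  set C := ∑ x, ∑ y, (u x true - a) * (w y true - b) * r x y with hCdef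
  have hSu0 : 0 ≤ Su := Finset.sum_nonneg fun x _ => Finset.sum_nonneg fun y _ =>
    mul_nonneg (sq_nonneg _) (hr0 x y)
  have hSw0 : 0 ≤ Sw := Finset.sum_nonneg fun x _ => Finset.sum_nonneg fun y _ =>
    mul_nonneg (sq_nonneg _) (hr0 x y)
  -- expansion computations
  have expandC : ∀ x y, (u x true - a) * (w y true - b) * r x y =
      r x y * (u x true * w y true) - a * (r x y * w y true) - b * (r x y * u x true)
        + (a * b) * r x y := fun x y => by ring
  have hC : C = z - a * b := by
    rw [hCdef]
    simp only [expandC, Finset.sum_sub_distrib, Finset.sum_add_distrib, ← Finset.mul_sum]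
    rw [← hz, ← ha, ← hb, hr1]
    ring
  have expandSu : ∀ x y, (u x true - a) ^ 2 * r x y =
      (u x true ^ 2 * r x y - u x true * r x y)
        + ((1 - 2 * a) * (r x y * u x true) + a ^ 2 * r x y) := fun x y => by ring
  have hSuLe : Su ≤ a * (1 - a) := by
    have key : Su = (∑ x, ∑ y, (u x true ^ 2 * r x y - u x true * r x y)) + (a - a ^ 2) := by
      rw [hSu]
      simp only [expandSu, Finset.sum_add_distrib, ← Finset.mul_sum]
      rw [← ha, hr1]
      ring
    have hneg : (∑ x, ∑ y, (u x true ^ 2 * r x y - u x true * r x y)) ≤ 0 := by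
      refine Finset.sum_nonpos fun x _ => Finset.sum_nonpos fun y _ => ?_
      have h1 : u x true ^ 2 ≤ u x true := by nlinarith [hu0 x true, hu1' x]
      nlinarith [hr0 x y]
    nlinarith
  have expandSw : ∀ x y, (w y true - b) ^ 2 * r x y =
      (w y true ^ 2 * r x y - w y true * r x y)
        + ((1 - 2 * b) * (r x y * w y true) + b ^ 2 * r x y) := fun x y => by ring
  have hSwLe : Sw ≤ b * (1 - b) := by
    have key : Sw = (∑ x, ∑ y, (w y true ^ 2 * r x y - w y true * r x y)) + (b - b ^ 2) := by
      rw [hSw]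
      simp only [expandSw, Finset.sum_add_distrib, ← Finset.mul_sum]
      rw [← hb, hr1]
      ring
    have hneg : (∑ x, ∑ y, (w y true ^ 2 * r x y - w y true * r x y)) ≤ 0 := by
      refine Finset.sum_nonpos fun x _ => Finset.sum_nonpos fun y _ => ?_
      have h1 : w y true ^ 2 ≤ w y true := by nlinarith [hw0 y true, hw1' y]
      nlinarith [hr0 x y]
    nlinarith
  have hmc0 : 0 ≤ maxCorr r := maxCorr_nonneg r hr0
  have hsqrt0 : 0 ≤ Real.sqrt (a * (1 - a) * (b * (1 - b))) := Real.sqrt_nonneg _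
  rcases le_or_gt C 0 with hCle | hCpos
  · nlinarith [mul_nonneg hmc0 hsqrt0]
  -- main case : C > 0
  have hCS : C ^ 2 ≤ Su * Sw := double_cs r hr0 _ _
  have hSupos : 0 < Su := by
    rcases lt_or_eq_of_le hSu0 with h | h
    · exact h
    · exfalso; rw [← h] at hCS; nlinarith
  have hSwpos : 0 < Sw := by
    rcases lt_or_eq_of_le hSw0 with h | h
    · exact h
    · exfalso; rw [← h] at hCS; nlinarith
  set cu := (Real.sqrt Su)⁻¹ with hcu
  set cw := (Real.sqrt Sw)⁻¹ with hcw
  have hsu : 0 < Real.sqrt Su := Real.sqrt_pos.2 hSupos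
  have hsw : 0 < Real.sqrt Sw := Real.sqrt_pos.2 hSwpos
  have hmean_u : (∑ x, ∑ y, (u x true - a) * r x y) = 0 := by
    have expand : ∀ x y, (u x true - a) * r x y = r x y * u x true - a * r x y :=
      fun x y => by ring
    simp only [expand, Finset.sum_sub_distrib, ← Finset.mul_sum]
    rw [← ha, hr1]; ring
  have hmean_w : (∑ x, ∑ y, (w y true - b) * r x y) = 0 := by
    have expand : ∀ x y, (w y true - b) * r x y = r x y * w y true - b * r x y :=
      fun x y => by ring
    simp only [expand, Finset.sum_sub_distrib, ← Finset.mul_sum]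
    rw [← hb, hr1]; ring
  have hmem : cu * cw * C ∈ { t : ℝ | ∃ f : α → ℝ, ∃ g : β → ℝ,
      (∑ x, ∑ y, f x * r x y) = 0 ∧ (∑ x, ∑ y, g y * r x y) = 0 ∧
      (∑ x, ∑ y, (f x) ^ 2 * r x y) = 1 ∧ (∑ x, ∑ y, (g y) ^ 2 * r x y) = 1 ∧
      t = ∑ x, ∑ y, f x * g y * r x y } := by
    refine ⟨fun x => cu * (u x true - a), fun y => cw * (w y true - b), ?_, ?_, ?_, ?_, ?_⟩
    · have expand : ∀ x y, cu * (u x true - a) * r x y = cu * ((u x true - a) * r x y) :=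
        fun x y => by ring
      simp only [expand]
      rw [pull_const, hmean_u, mul_zero]
    · have expand : ∀ x y, cw * (w y true - b) * r x y = cw * ((w y true - b) * r x y) :=
        fun x y => by ring
      simp only [expand]
      rw [pull_const, hmean_w, mul_zero]
    · have expand : ∀ x y, (cu * (u x true - a)) ^ 2 * r x y =
          cu ^ 2 * ((u x true - a) ^ 2 * r x y) := fun x y => by ring
      simp only [expand]
      rw [pull_const, ← hSu, hcu, ← Real.sqrt_inv, Real.sq_sqrt (by positivity)]
      exact inv_mul_cancel₀ (ne_of_gt hSupos)
    · have expand : ∀ x y, (cw * (w y true - b)) ^ 2 * r x y =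
          cw ^ 2 * ((w y true - b) ^ 2 * r x y) := fun x y => by ring
      simp only [expand]
      rw [pull_const, ← hSw, hcw, ← Real.sqrt_inv, Real.sq_sqrt (by positivity)]
      exact inv_mul_cancel₀ (ne_of_gt hSwpos)
    · have expand : ∀ x y, cu * (u x true - a) * (cw * (w y true - b)) * r x y =
          (cu * cw) * ((u x true - a) * (w y true - b) * r x y) := fun x y => by ring
      simp only [expand]
      rw [pull_const, ← hCdef, mul_assoc]
  have hle : cu * cw * C ≤ maxCorr r := le_csSup (maxCorr_bddAbove r hr0) hmem
  have hprod : C = (cu * cw * C) * (Real.sqrt Su * Real.sqrt Sw) := by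
    rw [hcu, hcw]; field_simp
  have step1 : C ≤ maxCorr r * (Real.sqrt Su * Real.sqrt Sw) := by
    rw [hprod]
    exact mul_le_mul_of_nonneg_right hle (by positivity)
  have hsuLe : Real.sqrt Su ≤ Real.sqrt (a * (1 - a)) := Real.sqrt_le_sqrt hSuLe
  have hswLe : Real.sqrt Sw ≤ Real.sqrt (b * (1 - b)) := Real.sqrt_le_sqrt hSwLe
  have step2 : maxCorr r * (Real.sqrt Su * Real.sqrt Sw) ≤
      maxCorr r * (Real.sqrt (a * (1 - a)) * Real.sqrt (b * (1 - b))) := by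
    exact mul_le_mul_of_nonneg_left
      (mul_le_mul hsuLe hswLe hsw.le (Real.sqrt_nonneg _)) hmc0
  have hsplit : Real.sqrt (a * (1 - a) * (b * (1 - b))) =
      Real.sqrt (a * (1 - a)) * Real.sqrt (b * (1 - b)) :=
    Real.sqrt_mul (le_trans hSu0 hSuLe) _
  rw [hsplit]
  linarith
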